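/- The map D ↦ (I(D), [2n]∖I(D)) is a bijection from T_n onto the set of standard partitions of [2n] into at most two parts. -/

import Mathlib

open scoped Classical
noncomputable section

/-- `D` is a symmetric Temperley–Lieb diagram on `4n` vertices, identified with a partial
matching of `[2n] = {1,…,2n}`: a set of pairwise disjoint pairs `(i,j)` with `1 ≤ i < j ≤ 2n`,
noncrossing, and such that no uncovered vertex lies strictly between the endpoints of any pair. -/
def IsTL (n : ℕ) (D : Finset (ℕ × ℕ)) : Prop :=
  (∀ p ∈ D, 1 ≤ p.1 ∧ p.1 < p.2 ∧ p.2 ≤ 2 * n) ∧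
  (∀ p ∈ D, ∀ q ∈ D, p ≠ q → p.1 ≠ q.1 ∧ p.1 ≠ q.2 ∧ p.2 ≠ q.1 ∧ p.2 ≠ q.2) ∧
  (∀ p ∈ D, ∀ q ∈ D, ¬(p.1 < q.1 ∧ q.1 < p.2 ∧ p.2 < q.2)) ∧
  (∀ p ∈ D, ∀ k, p.1 < k → k < p.2 → ∃ q ∈ D, k = q.1 ∨ k = q.2)

/-- `I(D) ⊆ [2n]`: the vertices not covered by `D` together with the smaller element of each
pair of `D`; equivalently, the vertices of `[2n]` that are not the larger element of a pair. -/
def ID (n : ℕ) (D : Finset (ℕ × ℕ)) : Finset ℕ :=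
  (Finset.Icc 1 (2 * n)).filter fun k => ¬ ∃ p ∈ D, p.2 = k

/-- `(I, Ī)` (with `Ī = [2n] ∖ I`) is a standard partition of `[2n]`: writing
`I = {i_1 < … < i_a}` and `Ī = {j_1 < … < j_b}`, we have `a ≥ b` and `i_k < j_k` for all
`1 ≤ k ≤ b`. -/
def IsStandardPart (n : ℕ) (I : Finset ℕ) : Prop :=
  I ⊆ Finset.Icc 1 (2 * n) ∧
  (Finset.Icc 1 (2 * n) \ I).card ≤ I.card ∧
  ∀ k < (Finset.Icc 1 (2 * n) \ I).card,
    (I.sort (· ≤ ·)).getD k 0 < ((Finset.Icc 1 (2 * n) \ I).sort (· ≤ ·)).getD k 0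

namespace TLDev



/-! ### sorted lists -/

lemma sorted_getD_le_iff (l : List ℕ) (hs : l.Pairwise (· ≤ ·)) (k : ℕ) (hk : k < l.length) (m : ℕ) :
    l.getD k 0 ≤ m ↔ k < (l.filter (fun x => decide (x ≤ m))).length := by
  rw [List.getD_eq_getElem _ _ hk, ← List.countP_eq_length_filter]
  constructor
  · intro h
    have : (l.take (k+1)).countP (fun x => decide (x ≤ m)) + (l.drop (k+1)).countP (fun x => decide (x ≤ m)) = l.countP (fun x => decide (x ≤ m)) := by
      rw [← List.countP_append, List.take_append_drop]
    have h1 : (l.take (k+1)).countP (fun x => decide (x ≤ m)) = k + 1 := by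
      rw [List.countP_eq_length.2, List.length_take]
      · omega
      · intro a ha
        obtain ⟨i, hi, rfl⟩ := List.mem_take_iff_getElem.1 ha
        simp only [decide_eq_true_eq]
        calc l[i] ≤ l[k] := by
              apply hs.rel_get_of_le
              simp only [Fin.mk_le_mk]
              omega
          _ ≤ m := h
    omega
  · intro h
    by_contra hc
    push_neg at hc
    have : (l.take k).countP (fun x => decide (x ≤ m)) + (l.drop k).countP (fun x => decide (x ≤ m)) = l.countP (fun x => decide (x ≤ m)) := by
      rw [← List.countP_append, List.take_append_drop]
    have h2 : (l.drop k).countP (fun x => decide (x ≤ m)) = 0 := by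
      rw [List.countP_eq_zero]
      intro a ha
      obtain ⟨i, hi, rfl⟩ := List.mem_drop_iff_getElem.1 ha
      simp only [decide_eq_true_eq, not_le]
      calc m < l[k] := hc
        _ ≤ l[k + i] := by
              apply hs.rel_get_of_le
              simp only [Fin.mk_le_mk]
              omega
    have h3 : (l.take k).countP (fun x => decide (x ≤ m)) ≤ k := by
      calc _ ≤ (l.take k).length := List.countP_le_length
        _ ≤ k := by rw [List.length_take]; omega
    omega

lemma filter_sort_length (S : Finset ℕ) (p : ℕ → Prop) [DecidablePred p] :
    ((S.sort (· ≤ ·)).filter (fun x => decide (p x))).length = (S.filter p).card := by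
  rw [← Multiset.coe_card, ← Multiset.filter_coe, Finset.sort_eq]; rfl

lemma getD_mem (S : Finset ℕ) (k : ℕ) (hk : k < S.card) : (S.sort (· ≤ ·)).getD k 0 ∈ S := by
  have hl : k < (S.sort (· ≤ ·)).length := by rwa [Finset.length_sort]
  rw [List.getD_eq_getElem _ _ hl, ← Finset.mem_sort (· ≤ ·)]
  exact List.getElem_mem hl

lemma getD_le_iff (S : Finset ℕ) (k : ℕ) (hk : k < S.card) (m : ℕ) :
    (S.sort (· ≤ ·)).getD k 0 ≤ m ↔ k < (S.filter (· ≤ m)).card := by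
  rw [← filter_sort_length S (· ≤ m)]
  exact sorted_getD_le_iff _ (S.pairwise_sort _) k (by rwa [Finset.length_sort]) m

/-! ### max/min helpers -/

lemma max_unbot'_mem {S : Finset ℕ} (h : S.Nonempty) : S.max.unbotD 0 ∈ S := by
  obtain ⟨a, ha⟩ := Finset.max_of_nonempty h
  rw [ha]; exact Finset.mem_of_max ha

lemma le_max_unbot' {S : Finset ℕ} {x : ℕ} (h : x ∈ S) : x ≤ S.max.unbotD 0 := by
  obtain ⟨a, ha⟩ := Finset.max_of_nonempty ⟨x, h⟩
  have h2 := Finset.le_max h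
  rw [ha] at h2 ⊢
  exact_mod_cast h2

lemma min_untop'_mem {S : Finset ℕ} (h : S.Nonempty) : S.min.untopD 0 ∈ S := by
  obtain ⟨a, ha⟩ := Finset.min_of_nonempty h
  rw [ha]; exact Finset.mem_of_min ha

lemma min_untop'_le {S : Finset ℕ} {x : ℕ} (h : x ∈ S) : S.min.untopD 0 ≤ x := by
  obtain ⟨a, ha⟩ := Finset.min_of_nonempty ⟨x, h⟩
  have h2 := Finset.min_le h
  rw [ha] at h2 ⊢
  exact_mod_cast h2

/-! ### discrete IVT -/

lemma ivt_up (f : ℕ → ℤ) (hstep : ∀ m, f (m+1) ≤ f m + 1) (a c : ℕ) (hac : a ≤ c)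
    (t : ℤ) (h1 : f a ≤ t) (h2 : t ≤ f c) : ∃ m, a ≤ m ∧ m ≤ c ∧ f m = t := by
  induction c with
  | zero =>
    have : a = 0 := Nat.le_zero.mp hac
    subst this
    exact ⟨0, le_refl _, le_refl _, le_antisymm h1 h2⟩
  | succ c ih =>
    by_cases he : f (c+1) = t
    · exact ⟨c+1, hac, le_refl _, he⟩
    · have ht : t < f (c+1) := lt_of_le_of_ne h2 (Ne.symm he)
      by_cases hc : a ≤ c
      · have h2' : t ≤ f c := by have := hstep c; omega
        obtain ⟨m, hm1, hm2, hm3⟩ := ih hc h2'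
        exact ⟨m, hm1, Nat.le_succ_of_le hm2, hm3⟩
      · have : a = c + 1 := by omega
        subst this
        omega

lemma ivt_down (f : ℕ → ℤ) (hstep : ∀ m, f m - 1 ≤ f (m+1)) (a c : ℕ) (hac : a ≤ c)
    (t : ℤ) (h1 : t ≤ f a) (h2 : f c ≤ t) : ∃ m, a ≤ m ∧ m ≤ c ∧ f m = t := by
  obtain ⟨m, hm1, hm2, hm3⟩ := ivt_up (fun m => -f m)
    (fun m => by show -f (m+1) ≤ -f m + 1; have := hstep m; omega)
    a c hac (-t) (by show -f a ≤ -t; omega) (by show -t ≤ -f c; omega)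
  have : -f m = -t := hm3
  exact ⟨m, hm1, hm2, by omega⟩

/-! ### counting and balance -/

def cnt (S : Finset ℕ) (m : ℕ) : ℕ := (S.filter (· ≤ m)).card

def bal (n : ℕ) (I : Finset ℕ) (m : ℕ) : ℤ :=
  (cnt I m : ℤ) - (cnt (Finset.Icc 1 (2*n) \ I) m : ℤ)

lemma cnt_zero' {S : Finset ℕ} {N : ℕ} (hS : S ⊆ Finset.Icc 1 N) : cnt S 0 = 0 := by
  rw [cnt, Finset.card_eq_zero, Finset.filter_eq_empty_iff]
  intro x hx
  have := hS hx
  simp only [Finset.mem_Icc] at this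
  omega

lemma cnt_succ_mem {S : Finset ℕ} {m : ℕ} (h : m + 1 ∈ S) : cnt S (m+1) = cnt S m + 1 := by
  have : S.filter (· ≤ m + 1) = insert (m+1) (S.filter (· ≤ m)) := by
    ext x
    simp only [Finset.mem_filter, Finset.mem_insert]
    constructor
    · rintro ⟨hx, hle⟩
      rcases Nat.lt_or_ge x (m+1) with h' | h'
      · exact Or.inr ⟨hx, by omega⟩
      · exact Or.inl (by omega)
    · rintro (rfl | ⟨hx, hle⟩)
      · exact ⟨h, le_refl _⟩
      · exact ⟨hx, by omega⟩
  rw [cnt, cnt, this, Finset.card_insert_of_notMem (by simp)]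

lemma cnt_succ_not_mem {S : Finset ℕ} {m : ℕ} (h : m + 1 ∉ S) : cnt S (m+1) = cnt S m := by
  unfold cnt
  congr 1
  ext x
  simp only [Finset.mem_filter]
  constructor
  · rintro ⟨hx, hle⟩
    refine ⟨hx, ?_⟩
    rcases Nat.lt_or_ge x (m+1) with h' | h'
    · omega
    · have hx1 : x = m + 1 := by omega
      exact absurd (hx1 ▸ hx) h
  · rintro ⟨hx, hle⟩; exact ⟨hx, by omega⟩

lemma cnt_eq_card {S : Finset ℕ} {N : ℕ} (hS : S ⊆ Finset.Icc 1 N) : cnt S N = S.card := by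
  rw [cnt]
  congr 1
  apply Finset.filter_true_of_mem
  intro x hx
  have := hS hx
  simp only [Finset.mem_Icc] at this
  exact this.2

lemma cnt_mono {S : Finset ℕ} {m m' : ℕ} (h : m ≤ m') : cnt S m ≤ cnt S m' :=
  Finset.card_le_card (by
    intro x hx
    simp only [Finset.mem_filter] at *
    exact ⟨hx.1, le_trans hx.2 h⟩)

variable {n : ℕ} {I : Finset ℕ}

lemma bal_zero (hI : I ⊆ Finset.Icc 1 (2*n)) : bal n I 0 = 0 := by
  rw [bal, cnt_zero' hI, cnt_zero' (Finset.sdiff_subset)]; simp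

lemma bal_succ_opener (hI : I ⊆ Finset.Icc 1 (2*n)) {m : ℕ} (h : m + 1 ∈ I) :
    bal n I (m+1) = bal n I m + 1 := by
  have h2 : m + 1 ∉ Finset.Icc 1 (2*n) \ I := fun hc => (Finset.mem_sdiff.mp hc).2 h
  rw [bal, bal, cnt_succ_mem h, cnt_succ_not_mem h2]
  push_cast; ring

lemma bal_succ_closer {m : ℕ} (h : m + 1 ∈ Finset.Icc 1 (2*n) \ I) :
    bal n I (m+1) = bal n I m - 1 := by
  have h2 : m + 1 ∉ I := (Finset.mem_sdiff.mp h).2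
  rw [bal, bal, cnt_succ_mem h, cnt_succ_not_mem h2]
  push_cast; ring

lemma bal_succ_le (hI : I ⊆ Finset.Icc 1 (2*n)) (m : ℕ) : bal n I (m+1) ≤ bal n I m + 1 := by
  by_cases h : m + 1 ∈ I
  · rw [bal_succ_opener hI h]
  · rw [bal, bal, cnt_succ_not_mem h]
    have : cnt (Finset.Icc 1 (2*n) \ I) m ≤ cnt (Finset.Icc 1 (2*n) \ I) (m+1) := cnt_mono (by omega)
    omega

lemma le_bal_succ (hI : I ⊆ Finset.Icc 1 (2*n)) (m : ℕ) : bal n I m - 1 ≤ bal n I (m+1) := by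
  by_cases h : m + 1 ∈ Finset.Icc 1 (2*n) \ I
  · rw [bal_succ_closer h]
  · rw [bal, bal, cnt_succ_not_mem h]
    have : cnt I m ≤ cnt I (m+1) := cnt_mono (by omega)
    omega

/-- step at an element of `Icc 1 (2n)`, phrased with `j - 1`. -/
lemma bal_opener (hI : I ⊆ Finset.Icc 1 (2*n)) {j : ℕ} (h : j ∈ I) :
    bal n I j = bal n I (j-1) + 1 := by
  have h1 : 1 ≤ j := by have := hI h; simp only [Finset.mem_Icc] at this; omega
  have := bal_succ_opener (n := n) hI (m := j - 1) (by rwa [Nat.sub_add_cancel h1])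
  rwa [Nat.sub_add_cancel h1] at this

lemma bal_closer {j : ℕ} (h : j ∈ Finset.Icc 1 (2*n) \ I) :
    bal n I j = bal n I (j-1) - 1 := by
  have h1 : 1 ≤ j := by have := (Finset.mem_sdiff.mp h).1; simp only [Finset.mem_Icc] at this; omega
  have := bal_succ_closer (n := n) (I := I) (m := j - 1) (by rwa [Nat.sub_add_cancel h1])
  rwa [Nat.sub_add_cancel h1] at this

/-! ### the matching -/

def cand (n : ℕ) (I : Finset ℕ) (j : ℕ) : Finset ℕ :=
  I.filter (fun k => k < j ∧ bal n I (k-1) = bal n I j)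

def partner (n : ℕ) (I : Finset ℕ) (j : ℕ) : ℕ := (cand n I j).max.unbotD 0

def Dmap (n : ℕ) (I : Finset ℕ) : Finset (ℕ × ℕ) :=
  (Finset.Icc 1 (2*n) \ I).image (fun j => (partner n I j, j))

lemma partner_eq {n : ℕ} {I : Finset ℕ} {j x : ℕ} (hx : x ∈ cand n I j)
    (hub : ∀ y ∈ cand n I j, y ≤ x) : partner n I j = x :=
  le_antisymm (hub _ (max_unbot'_mem ⟨x, hx⟩)) (le_max_unbot' hx)

/-- Given a point `m ∈ [a, j-1]` where the balance equals `bal j`, there is an opener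
`k ∈ (a, j)` with `bal (k-1) = bal j`. -/
lemma exists_opener {n : ℕ} {I : Finset ℕ} (hI : I ⊆ Finset.Icc 1 (2*n)) {j : ℕ}
    (hj : j ∈ Finset.Icc 1 (2*n) \ I) (a : ℕ)
    (hm : ∃ m, a ≤ m ∧ m < j ∧ bal n I m = bal n I j) :
    ∃ k ∈ I, a < k ∧ k < j ∧ bal n I (k-1) = bal n I j := by
  have hjIcc : 1 ≤ j ∧ j ≤ 2*n := by
    have := (Finset.mem_sdiff.mp hj).1; simpa [Finset.mem_Icc] using this
  have hbj : bal n I j = bal n I (j-1) - 1 := bal_closer hj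
  set M : Finset ℕ := (Finset.Icc a (j-1)).filter (fun m => bal n I m = bal n I j) with hM
  have hMne : M.Nonempty := by
    obtain ⟨m, h1, h2, h3⟩ := hm
    exact ⟨m, by simp only [hM, Finset.mem_filter, Finset.mem_Icc]; exact ⟨⟨h1, by omega⟩, h3⟩⟩
  set s := M.max.unbotD 0 with hs
  have hsM : s ∈ M := max_unbot'_mem hMne
  have hsIcc : a ≤ s ∧ s ≤ j - 1 := by
    have := (Finset.mem_filter.mp hsM).1; simpa [Finset.mem_Icc] using this
  have hsbal : bal n I s = bal n I j := (Finset.mem_filter.mp hsM).2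
  have hsne : s ≠ j - 1 := by
    intro h
    rw [h] at hsbal
    omega
  have hs2 : s + 1 ≤ j - 1 := by omega
  have hsI : s + 1 ∈ I := by
    by_contra hns
    have hmem : s + 1 ∈ Finset.Icc 1 (2*n) \ I := by
      simp only [Finset.mem_sdiff, Finset.mem_Icc]
      exact ⟨⟨by omega, by omega⟩, hns⟩
    have hdown : bal n I (s+1) = bal n I s - 1 := bal_succ_closer hmem
    -- climb back up to bal j on [s+1, j-1]
    obtain ⟨m', hm1, hm2, hm3⟩ := ivt_up (bal n I) (bal_succ_le hI) (s+1) (j-1) hs2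
      (bal n I j) (by omega) (by omega)
    have : m' ∈ M := by
      simp only [hM, Finset.mem_filter, Finset.mem_Icc]
      exact ⟨⟨by omega, hm2⟩, hm3⟩
    have := le_max_unbot' this
    omega
  refine ⟨s + 1, hsI, by omega, by omega, ?_⟩
  simpa using hsbal

/-- basic properties of the partner of a closer. -/
lemma partner_mem {n : ℕ} {I : Finset ℕ} (hI : I ⊆ Finset.Icc 1 (2*n))
    (hnn : ∀ m, 0 ≤ bal n I m) {j : ℕ} (hj : j ∈ Finset.Icc 1 (2*n) \ I) :
    partner n I j ∈ cand n I j := by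
  have hjIcc : 1 ≤ j ∧ j ≤ 2*n := by
    have := (Finset.mem_sdiff.mp hj).1; simpa [Finset.mem_Icc] using this
  have hbj : bal n I j = bal n I (j-1) - 1 := bal_closer hj
  obtain ⟨m, h1, h2, h3⟩ := ivt_up (bal n I) (bal_succ_le hI) 0 (j-1) (by omega)
    (bal n I j) (by rw [bal_zero hI]; exact hnn j) (by omega)
  obtain ⟨k, hk1, hk2, hk3, hk4⟩ := exists_opener hI hj 0 ⟨m, h1, by omega, h3⟩
  have hkc : k ∈ cand n I j := by
    simp only [cand, Finset.mem_filter]; exact ⟨hk1, hk3, hk4⟩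
  exact max_unbot'_mem ⟨k, hkc⟩

lemma partner_spec {n : ℕ} {I : Finset ℕ} (hI : I ⊆ Finset.Icc 1 (2*n))
    (hnn : ∀ m, 0 ≤ bal n I m) {j : ℕ} (hj : j ∈ Finset.Icc 1 (2*n) \ I) :
    partner n I j ∈ I ∧ partner n I j < j ∧ bal n I (partner n I j - 1) = bal n I j := by
  have := partner_mem hI hnn hj
  simp only [cand, Finset.mem_filter] at this
  exact ⟨this.1, this.2.1, this.2.2⟩

/-- The balance stays strictly above `bal j` on `[partner j, j)`. -/
lemma bal_gt_between {n : ℕ} {I : Finset ℕ} (hI : I ⊆ Finset.Icc 1 (2*n))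
    (hnn : ∀ m, 0 ≤ bal n I m) {j : ℕ} (hj : j ∈ Finset.Icc 1 (2*n) \ I)
    {m : ℕ} (h1 : partner n I j ≤ m) (h2 : m < j) : bal n I j < bal n I m := by
  obtain ⟨hiI, hij, hib⟩ := partner_spec hI hnn hj
  set i := partner n I j with hi
  have hbi : bal n I i = bal n I j + 1 := by
    rw [bal_opener hI hiI, hib]
  by_contra hc
  push_neg at hc
  -- bal m ≤ bal j; descend from i to m to find an equality point
  have him : i < m := by
    rcases Nat.lt_or_ge i m with h | h
    · exact h
    · exfalso; have : i = m := by omega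
      rw [← this] at hc; omega
  obtain ⟨m', hm1, hm2, hm3⟩ := ivt_down (bal n I) (le_bal_succ hI) i m (by omega)
    (bal n I j) (by omega) hc
  obtain ⟨k, hk1, hk2, hk3, hk4⟩ := exists_opener hI hj i ⟨m', hm1, by omega, hm3⟩
  have hkc : k ∈ cand n I j := by
    simp only [cand, Finset.mem_filter]; exact ⟨hk1, hk3, hk4⟩
  have hle : k ≤ partner n I j := le_max_unbot' hkc
  omega

/-- Every opener strictly inside an arc is itself the partner of a closer inside the arc. -/
lemma exists_closer {n : ℕ} {I : Finset ℕ} (hI : I ⊆ Finset.Icc 1 (2*n))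
    (hnn : ∀ m, 0 ≤ bal n I m) {j : ℕ} (hj : j ∈ Finset.Icc 1 (2*n) \ I)
    {k : ℕ} (hk : k ∈ I) (hk1 : partner n I j < k) (hk2 : k < j) :
    ∃ l ∈ Finset.Icc 1 (2*n) \ I, k < l ∧ l ≤ j ∧ partner n I l = k := by
  have hjIcc : 1 ≤ j ∧ j ≤ 2*n := by
    have := (Finset.mem_sdiff.mp hj).1; simpa [Finset.mem_Icc] using this
  have hkIcc : 1 ≤ k ∧ k ≤ 2*n := by
    have := hI hk; simpa [Finset.mem_Icc] using this
  have hgt : bal n I j < bal n I (k-1) := bal_gt_between hI hnn hj (by omega) (by omega)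
  have hbk : bal n I k = bal n I (k-1) + 1 := bal_opener hI hk
  obtain ⟨m, h1, h2, h3⟩ := ivt_down (bal n I) (le_bal_succ hI) k j (by omega)
    (bal n I (k-1)) (by omega) (by omega)
  set M : Finset ℕ := (Finset.Icc k j).filter (fun m => bal n I m = bal n I (k-1)) with hM
  have hMne : M.Nonempty := ⟨m, by simp only [hM, Finset.mem_filter, Finset.mem_Icc]; exact ⟨⟨h1, h2⟩, h3⟩⟩
  set l := M.min.untopD 0 with hl
  have hlM : l ∈ M := min_untop'_mem hMne
  have hlIcc : k ≤ l ∧ l ≤ j := by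
    have := (Finset.mem_filter.mp hlM).1; simpa [Finset.mem_Icc] using this
  have hlbal : bal n I l = bal n I (k-1) := (Finset.mem_filter.mp hlM).2
  have hlk : k < l := by
    rcases Nat.lt_or_ge k l with h | h
    · exact h
    · exfalso; have : l = k := by omega
      rw [this] at hlbal; omega
  -- every point of [k, l-1] has balance ≠ bal (k-1), in fact > ; first ≠ by minimality
  have hne : ∀ m', k ≤ m' → m' < l → bal n I m' ≠ bal n I (k-1) := by
    intro m' ha hb hc
    have : m' ∈ M := by
      simp only [hM, Finset.mem_filter, Finset.mem_Icc]
      exact ⟨⟨ha, by omega⟩, hc⟩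
    have := min_untop'_le this
    omega
  have hgt' : ∀ m', k ≤ m' → m' < l → bal n I (k-1) < bal n I m' := by
    intro m' ha hb
    by_contra hc
    push_neg at hc
    have hlt : bal n I m' < bal n I (k-1) := lt_of_le_of_ne hc (hne m' ha hb)
    obtain ⟨m'', h1, h2, h3⟩ := ivt_down (bal n I) (le_bal_succ hI) k m' ha
      (bal n I (k-1)) (by omega) (by omega)
    exact hne m'' h1 (by omega) h3
  have hlJ : l ∈ Finset.Icc 1 (2*n) \ I := by
    simp only [Finset.mem_sdiff, Finset.mem_Icc]
    refine ⟨⟨by omega, by omega⟩, fun hc => ?_⟩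
    have := bal_opener hI hc
    have := hgt' (l-1) (by omega) (by omega)
    omega
  refine ⟨l, hlJ, hlk, hlIcc.2, ?_⟩
  apply partner_eq
  · simp only [cand, Finset.mem_filter]
    exact ⟨hk, hlk, by rw [hlbal]⟩
  · intro y hy
    simp only [cand, Finset.mem_filter] at hy
    by_contra hc
    push_neg at hc
    have hyb : bal n I (y-1) = bal n I (k-1) := by rw [hy.2.2, hlbal]
    have hyI : 1 ≤ y := by have := hI hy.1; simp only [Finset.mem_Icc] at this; omega
    exact hne (y-1) (by omega) (by omega) hyb
/-- distinct closers have distinct partners. -/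
lemma partner_ne {n : ℕ} {I : Finset ℕ} (hI : I ⊆ Finset.Icc 1 (2*n))
    (hnn : ∀ m, 0 ≤ bal n I m) {j j' : ℕ} (hj : j ∈ Finset.Icc 1 (2*n) \ I)
    (hj' : j' ∈ Finset.Icc 1 (2*n) \ I) (hlt : j < j') : partner n I j ≠ partner n I j' := by
  intro he
  obtain ⟨h1, h2, h3⟩ := partner_spec hI hnn hj
  obtain ⟨h1', h2', h3'⟩ := partner_spec hI hnn hj'
  have hbal : bal n I j = bal n I j' := by rw [← h3, he, h3']
  obtain ⟨k, hk1, hk2, hk3, hk4⟩ := exists_opener hI hj' j ⟨j, le_refl _, hlt, hbal⟩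
  have hkc : k ∈ cand n I j' := by
    simp only [cand, Finset.mem_filter]; exact ⟨hk1, hk3, hk4⟩
  have hle : k ≤ partner n I j' := le_max_unbot' hkc
  omega

lemma mem_Dmap {n : ℕ} {I : Finset ℕ} {p : ℕ × ℕ} :
    p ∈ Dmap n I ↔ ∃ j ∈ Finset.Icc 1 (2*n) \ I, (partner n I j, j) = p := by
  simp [Dmap]

lemma IsTL_Dmap {n : ℕ} {I : Finset ℕ} (hI : I ⊆ Finset.Icc 1 (2*n))
    (hnn : ∀ m, 0 ≤ bal n I m) : IsTL n (Dmap n I) := by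
  have hspec : ∀ p ∈ Dmap n I, p.2 ∈ Finset.Icc 1 (2*n) \ I ∧ p.1 = partner n I p.2 := by
    intro p hp
    obtain ⟨j, hj, hje⟩ := mem_Dmap.mp hp
    rw [← hje]
    exact ⟨hj, rfl⟩
  refine ⟨?_, ?_, ?_, ?_⟩
  · -- bounds
    intro p hp
    obtain ⟨hj, he⟩ := hspec p hp
    obtain ⟨h1, h2, _⟩ := partner_spec hI hnn hj
    have hiIcc := hI h1
    simp only [Finset.mem_Icc] at hiIcc
    have hjIcc := (Finset.mem_sdiff.mp hj).1
    simp only [Finset.mem_Icc] at hjIcc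
    rw [he]
    exact ⟨hiIcc.1, h2, hjIcc.2⟩
  · -- disjointness
    intro p hp q hq hne
    obtain ⟨hjp, hep⟩ := hspec p hp
    obtain ⟨hjq, heq⟩ := hspec q hq
    have hj2 : p.2 ≠ q.2 := by
      intro h
      apply hne
      have : p = (partner n I p.2, p.2) := Prod.ext hep rfl
      have hq' : q = (partner n I q.2, q.2) := Prod.ext heq rfl
      rw [this, hq', h]
    obtain ⟨h1p, _, _⟩ := partner_spec hI hnn hjp
    obtain ⟨h1q, _, _⟩ := partner_spec hI hnn hjq
    refine ⟨?_, ?_, ?_, hj2⟩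
    · rw [hep, heq]
      rcases Nat.lt_or_ge p.2 q.2 with h | h
      · exact partner_ne hI hnn hjp hjq h
      · exact (partner_ne hI hnn hjq hjp (by omega)).symm
    · rw [hep]
      intro h
      exact (Finset.mem_sdiff.mp hjq).2 (h ▸ h1p)
    · rw [heq]
      intro h
      exact (Finset.mem_sdiff.mp hjp).2 (h.symm ▸ h1q)
  · -- noncrossing
    rintro p hp q hq ⟨hc1, hc2, hc3⟩
    obtain ⟨hjp, hep⟩ := hspec p hp
    obtain ⟨hjq, heq⟩ := hspec q hq
    obtain ⟨h1q, h2q, h3q⟩ := partner_spec hI hnn hjq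
    have hb1 : bal n I p.2 < bal n I (q.1 - 1) := by
      apply bal_gt_between hI hnn hjp
      · rw [← hep]; omega
      · omega
    have hb2 : bal n I q.2 < bal n I p.2 := by
      apply bal_gt_between hI hnn hjq
      · rw [← heq] at h2q ⊢; omega
      · exact hc3
    rw [← heq] at h3q
    omega
  · -- interior covered
    intro p hp k hk1 hk2
    obtain ⟨hjp, hep⟩ := hspec p hp
    have hjIcc := (Finset.mem_sdiff.mp hjp).1
    simp only [Finset.mem_Icc] at hjIcc
    obtain ⟨h1p, h2p, _⟩ := partner_spec hI hnn hjp
    have hp1 : 1 ≤ p.1 := by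
      have := hI (hep ▸ h1p)
      simp only [Finset.mem_Icc] at this; omega
    have hkIcc : k ∈ Finset.Icc 1 (2*n) := by
      simp only [Finset.mem_Icc]; omega
    by_cases hkI : k ∈ I
    · obtain ⟨l, hl, _, _, hpl⟩ := exists_closer hI hnn hjp hkI (by omega) hk2
      exact ⟨(partner n I l, l), mem_Dmap.mpr ⟨l, hl, rfl⟩, Or.inl (by rw [hpl])⟩
    · have hkJ : k ∈ Finset.Icc 1 (2*n) \ I := Finset.mem_sdiff.mpr ⟨hkIcc, hkI⟩
      exact ⟨(partner n I k, k), mem_Dmap.mpr ⟨k, hkJ, rfl⟩, Or.inr rfl⟩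

lemma ID_Dmap {n : ℕ} {I : Finset ℕ} (hI : I ⊆ Finset.Icc 1 (2*n)) :
    ID n (Dmap n I) = I := by
  ext x
  simp only [ID, Finset.mem_filter]
  constructor
  · rintro ⟨hx, hnx⟩
    by_contra hxI
    exact hnx ⟨(partner n I x, x), mem_Dmap.mpr ⟨x, Finset.mem_sdiff.mpr ⟨hx, hxI⟩, rfl⟩, rfl⟩
  · intro hxI
    refine ⟨hI hxI, ?_⟩
    rintro ⟨p, hp, hpx⟩
    obtain ⟨j, hj, hje⟩ := mem_Dmap.mp hp
    have : p.2 = j := by rw [← hje]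
    rw [this] at hpx
    exact (Finset.mem_sdiff.mp hj).2 (hpx ▸ hxI)
/-! ### facts about TL diagrams -/

section TLFacts

variable {n : ℕ} {D : Finset (ℕ × ℕ)}

lemma pair_eq_of_snd (hD : IsTL n D) {p q : ℕ × ℕ} (hp : p ∈ D) (hq : q ∈ D)
    (h : p.2 = q.2) : p = q := by
  by_contra hne; exact (hD.2.1 p hp q hq hne).2.2.2 h

lemma pair_eq_of_fst (hD : IsTL n D) {p q : ℕ × ℕ} (hp : p ∈ D) (hq : q ∈ D)
    (h : p.1 = q.1) : p = q := by
  by_contra hne; exact (hD.2.1 p hp q hq hne).1 h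

lemma opener_mem_ID (hD : IsTL n D) {p : ℕ × ℕ} (hp : p ∈ D) : p.1 ∈ ID n D := by
  have hb := hD.1 p hp
  simp only [ID, Finset.mem_filter, Finset.mem_Icc]
  refine ⟨⟨hb.1, by omega⟩, ?_⟩
  rintro ⟨q, hq, hq2⟩
  by_cases hne : q = p
  · subst hne; omega
  · exact (hD.2.1 q hq p hp hne).2.2.1 hq2

lemma closer_not_ID {p : ℕ × ℕ} (hp : p ∈ D) : p.2 ∉ ID n D := by
  simp only [ID, Finset.mem_filter, not_and, not_not]
  exact fun _ => ⟨p, hp, rfl⟩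

lemma closer_mem_sdiff (hD : IsTL n D) {p : ℕ × ℕ} (hp : p ∈ D) :
    p.2 ∈ Finset.Icc 1 (2*n) \ ID n D := by
  have hb := hD.1 p hp
  exact Finset.mem_sdiff.mpr ⟨by simp only [Finset.mem_Icc]; omega, closer_not_ID hp⟩

lemma mem_sdiff_ID {l : ℕ} :
    l ∈ Finset.Icc 1 (2*n) \ ID n D ↔ l ∈ Finset.Icc 1 (2*n) ∧ ∃ p ∈ D, p.2 = l := by
  simp only [ID, Finset.mem_sdiff, Finset.mem_filter, not_and, not_not]
  constructor
  · rintro ⟨h1, h2⟩; exact ⟨h1, h2 h1⟩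
  · rintro ⟨h1, h2⟩; exact ⟨h1, fun _ => h2⟩

def openerOf (D : Finset (ℕ × ℕ)) (l : ℕ) : ℕ :=
  if h : ∃ q, q ∈ D ∧ q.2 = l then (Classical.choose h).1 else 0

def closerOf (D : Finset (ℕ × ℕ)) (k : ℕ) : ℕ :=
  if h : ∃ q, q ∈ D ∧ q.1 = k then (Classical.choose h).2 else 0

lemma openerOf_eq (hD : IsTL n D) {p : ℕ × ℕ} (hp : p ∈ D) : openerOf D p.2 = p.1 := by
  have h : ∃ q, q ∈ D ∧ q.2 = p.2 := ⟨p, hp, rfl⟩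
  rw [openerOf, dif_pos h]
  obtain ⟨hq, hq2⟩ := Classical.choose_spec h
  rw [pair_eq_of_snd hD hq hp hq2]

lemma closerOf_eq (hD : IsTL n D) {p : ℕ × ℕ} (hp : p ∈ D) : closerOf D p.1 = p.2 := by
  have h : ∃ q, q ∈ D ∧ q.1 = p.1 := ⟨p, hp, rfl⟩
  rw [closerOf, dif_pos h]
  obtain ⟨hq, hq2⟩ := Classical.choose_spec h
  rw [pair_eq_of_fst hD hq hp hq2]

lemma interior_closer (hD : IsTL n D) {p q : ℕ × ℕ} (hp : p ∈ D) (hq : q ∈ D)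
    (h1 : p.1 < q.2) (h2 : q.2 < p.2) : p.1 < q.1 := by
  by_contra hc
  push_neg at hc
  have hne : q ≠ p := fun h => by rw [h] at h2; omega
  have : q.1 ≠ p.1 := (hD.2.1 q hq p hp hne).1
  exact hD.2.2.1 q hq p hp ⟨by omega, h1, h2⟩

lemma interior_opener (hD : IsTL n D) {p q : ℕ × ℕ} (hp : p ∈ D) (hq : q ∈ D)
    (h1 : p.1 < q.1) (h2 : q.1 < p.2) : q.2 < p.2 := by
  have hne : q ≠ p := fun h => by rw [h] at h1; omega
  have hne2 : q.2 ≠ p.2 := (hD.2.1 q hq p hp hne).2.2.2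
  by_contra hc
  push_neg at hc
  exact hD.2.2.1 p hp q hq ⟨h1, h2, by omega⟩

lemma cnt_split {S : Finset ℕ} {i j : ℕ} (h1 : 1 ≤ i) (h2 : i ≤ j + 1) :
    cnt S j = cnt S (i-1) + (S.filter (fun x => i ≤ x ∧ x ≤ j)).card := by
  have hdisj : Disjoint (S.filter (· ≤ i-1)) (S.filter (fun x => i ≤ x ∧ x ≤ j)) := by
    rw [Finset.disjoint_left]
    intro a ha hb
    simp only [Finset.mem_filter] at ha hb
    omega
  have hun : S.filter (· ≤ j) = S.filter (· ≤ i-1) ∪ S.filter (fun x => i ≤ x ∧ x ≤ j) := by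
    ext x
    simp only [Finset.mem_filter, Finset.mem_union]
    constructor
    · rintro ⟨hx, hle⟩
      rcases Nat.lt_or_ge x i with h | h
      · exact Or.inl ⟨hx, by omega⟩
      · exact Or.inr ⟨hx, h, hle⟩
    · rintro (⟨hx, hle⟩ | ⟨hx, hle1, hle2⟩) <;> exact ⟨hx, by omega⟩
  rw [cnt, cnt, hun, Finset.card_union_of_disjoint hdisj]

lemma bal_sub {I : Finset ℕ} {i j : ℕ} (h1 : 1 ≤ i) (h2 : i ≤ j + 1) :
    bal n I j = bal n I (i-1)
      + ((I.filter (fun x => i ≤ x ∧ x ≤ j)).card : ℤ)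
      - (((Finset.Icc 1 (2*n) \ I).filter (fun x => i ≤ x ∧ x ≤ j)).card : ℤ) := by
  have hA := cnt_split (S := I) (j := j) h1 h2
  have hB := cnt_split (S := Finset.Icc 1 (2*n) \ I) (j := j) h1 h2
  rw [bal, bal, hA, hB]
  push_cast
  ring

lemma card_closers_le (hD : IsTL n D) {p : ℕ × ℕ} (hp : p ∈ D) :
    (((Finset.Icc 1 (2*n) \ ID n D).filter (fun x => p.1 ≤ x ∧ x ≤ p.2)).card : ℕ)
      ≤ ((ID n D).filter (fun x => p.1 ≤ x ∧ x ≤ p.2)).card := by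
  apply Finset.card_le_card_of_injOn (openerOf D)
  · intro l hl
    simp only [Finset.mem_coe, Finset.mem_filter] at hl ⊢
    obtain ⟨hlJ, hl1, hl2⟩ := hl
    obtain ⟨hlIcc, q, hq, hq2⟩ := mem_sdiff_ID.mp hlJ
    subst hq2
    rw [openerOf_eq hD hq]
    rcases Nat.lt_or_ge q.2 p.2 with h | h
    · have hlo : p.1 < q.2 := by
        rcases Nat.lt_or_ge p.1 q.2 with h' | h'
        · exact h'
        · exfalso
          have : q.2 = p.1 := by omega
          exact (Finset.mem_sdiff.mp hlJ).2 (this ▸ opener_mem_ID hD hp)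
      have := interior_closer hD hp hq hlo h
      have := hD.1 q hq
      exact ⟨opener_mem_ID hD hq, by omega, by omega⟩
    · have : q.2 = p.2 := by omega
      have hqp : q = p := pair_eq_of_snd hD hq hp this
      subst hqp
      have := hD.1 q hq
      exact ⟨opener_mem_ID hD hq, le_refl _, by omega⟩
  · intro l hl l' hl' he
    simp only [Finset.coe_filter, Set.mem_setOf_eq] at hl hl'
    obtain ⟨hlJ, _⟩ := hl
    obtain ⟨hlJ', _⟩ := hl'
    obtain ⟨_, q, hq, hq2⟩ := mem_sdiff_ID.mp hlJ
    obtain ⟨_, q', hq', hq2'⟩ := mem_sdiff_ID.mp hlJ'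
    subst hq2; subst hq2'
    rw [openerOf_eq hD hq, openerOf_eq hD hq'] at he
    rw [pair_eq_of_fst hD hq hq' he]

lemma card_openers_le (hD : IsTL n D) {p : ℕ × ℕ} (hp : p ∈ D) :
    (((ID n D).filter (fun x => p.1 ≤ x ∧ x ≤ p.2)).card : ℕ)
      ≤ ((Finset.Icc 1 (2*n) \ ID n D).filter (fun x => p.1 ≤ x ∧ x ≤ p.2)).card := by
  apply Finset.card_le_card_of_injOn (closerOf D)
  · intro o ho
    simp only [Finset.mem_coe, Finset.mem_filter] at ho ⊢
    obtain ⟨hoI, ho1, ho2⟩ := ho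
    rcases Nat.lt_or_ge p.1 o with h | h
    · have hoj : o < p.2 := by
        rcases Nat.lt_or_ge o p.2 with h' | h'
        · exact h'
        · exfalso
          have : o = p.2 := by omega
          exact closer_not_ID hp (this ▸ hoI)
      obtain ⟨q, hq, hqe⟩ := hD.2.2.2 p hp o h hoj
      have hq1 : o = q.1 := by
        rcases hqe with h' | h'
        · exact h'
        · exfalso
          have h2 := closer_not_ID (n := n) hq
          rw [← h'] at h2
          exact h2 hoI
      subst hq1
      rw [closerOf_eq hD hq]
      have hlt := interior_opener hD hp hq h hoj
      have := hD.1 q hq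
      exact ⟨closer_mem_sdiff hD hq, by omega, by omega⟩
    · have : o = p.1 := by omega
      subst this
      rw [closerOf_eq hD hp]
      have := hD.1 p hp
      exact ⟨closer_mem_sdiff hD hp, by omega, le_refl _⟩
  · intro o ho o' ho' he
    simp only [Finset.coe_filter, Set.mem_setOf_eq] at ho ho'
    have hcov : ∀ x, x ∈ ID n D → p.1 ≤ x → x ≤ p.2 → ∃ q ∈ D, q.1 = x := by
      intro x hxI hx1 hx2
      rcases Nat.lt_or_ge p.1 x with h | h
      · have hxj : x < p.2 := by
          rcases Nat.lt_or_ge x p.2 with h' | h'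
          · exact h'
          · exfalso
            have : x = p.2 := by omega
            exact closer_not_ID hp (this ▸ hxI)
        obtain ⟨q, hq, hqe⟩ := hD.2.2.2 p hp x h hxj
        rcases hqe with h' | h'
        · exact ⟨q, hq, h'.symm⟩
        · exfalso
          have h2 := closer_not_ID (n := n) hq
          rw [← h'] at h2
          exact h2 hxI
      · have : x = p.1 := by omega
        exact ⟨p, hp, this.symm⟩
    obtain ⟨q, hq, hqe⟩ := hcov o ho.1 ho.2.1 ho.2.2
    obtain ⟨q', hq', hqe'⟩ := hcov o' ho'.1 ho'.2.1 ho'.2.2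
    rw [← hqe, closerOf_eq hD hq, ← hqe', closerOf_eq hD hq'] at he
    have := pair_eq_of_snd hD hq hq' he
    rw [← hqe, ← hqe', this]
lemma cover_opener (hD : IsTL n D) {p : ℕ × ℕ} (hp : p ∈ D) {x : ℕ} (hxI : x ∈ ID n D)
    (hx1 : p.1 ≤ x) (hx2 : x ≤ p.2) : ∃ q ∈ D, q.1 = x := by
  rcases Nat.lt_or_ge p.1 x with h | h
  · have hxj : x < p.2 := by
      rcases Nat.lt_or_ge x p.2 with h' | h'
      · exact h'
      · exfalso
        have : x = p.2 := by omega
        exact closer_not_ID hp (this ▸ hxI)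
    obtain ⟨q, hq, hqe⟩ := hD.2.2.2 p hp x h hxj
    rcases hqe with h' | h'
    · exact ⟨q, hq, h'.symm⟩
    · exfalso
      have h2 := closer_not_ID (n := n) hq
      rw [← h'] at h2
      exact h2 hxI
  · have : x = p.1 := by omega
    exact ⟨p, hp, this.symm⟩

lemma bal_arc (hD : IsTL n D) {p : ℕ × ℕ} (hp : p ∈ D) :
    bal n (ID n D) p.2 = bal n (ID n D) (p.1 - 1) := by
  have hb := hD.1 p hp
  have hsub := bal_sub (n := n) (I := ID n D) (i := p.1) (j := p.2) hb.1 (by omega)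
  have h1 := card_closers_le hD hp
  have h2 := card_openers_le hD hp
  omega

lemma bal_lt (hD : IsTL n D) {p : ℕ × ℕ} (hp : p ∈ D) {k : ℕ} (hkI : k ∈ ID n D)
    (h1 : p.1 < k) (h2 : k < p.2) :
    bal n (ID n D) p.2 < bal n (ID n D) (k - 1) := by
  have hb := hD.1 p hp
  have hsub := bal_sub (n := n) (I := ID n D) (i := k) (j := p.2) (by omega) (by omega)
  have hjmem : p.2 ∈ (Finset.Icc 1 (2*n) \ ID n D).filter (fun x => k ≤ x ∧ x ≤ p.2) := by
    simp only [Finset.mem_filter]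
    exact ⟨closer_mem_sdiff hD hp, by omega, le_refl _⟩
  have hinj : ((ID n D).filter (fun x => k ≤ x ∧ x ≤ p.2)).card ≤
      (((Finset.Icc 1 (2*n) \ ID n D).filter (fun x => k ≤ x ∧ x ≤ p.2)).erase p.2).card := by
    apply Finset.card_le_card_of_injOn (closerOf D)
    · intro o ho
      simp only [Finset.mem_coe, Finset.mem_filter] at ho
      obtain ⟨hoI, ho1, ho2⟩ := ho
      have honj : o ≠ p.2 := fun he => closer_not_ID hp (he ▸ hoI)
      obtain ⟨q, hq, hqe⟩ := cover_opener hD hp hoI (by omega) ho2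
      subst hqe
      rw [closerOf_eq hD hq]
      have hlt := interior_opener hD hp hq (by omega) (by omega)
      have hbq := hD.1 q hq
      simp only [Finset.mem_coe, Finset.mem_erase, Finset.mem_filter]
      exact ⟨by omega, closer_mem_sdiff hD hq, by omega, by omega⟩
    · intro o ho o' ho' he
      simp only [Finset.coe_filter, Set.mem_setOf_eq] at ho ho'
      obtain ⟨q, hq, hqe⟩ := cover_opener hD hp ho.1 (by omega) ho.2.2
      obtain ⟨q', hq', hqe'⟩ := cover_opener hD hp ho'.1 (by omega) ho'.2.2
      rw [← hqe, closerOf_eq hD hq, ← hqe', closerOf_eq hD hq'] at he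
      have := pair_eq_of_snd hD hq hq' he
      rw [← hqe, ← hqe', this]
  have hcarderase := Finset.card_erase_of_mem hjmem
  have hpos : 1 ≤ ((Finset.Icc 1 (2*n) \ ID n D).filter (fun x => k ≤ x ∧ x ≤ p.2)).card :=
    Finset.card_pos.mpr ⟨p.2, hjmem⟩
  omega

lemma partner_arc (hD : IsTL n D) {p : ℕ × ℕ} (hp : p ∈ D) :
    partner n (ID n D) p.2 = p.1 := by
  apply partner_eq
  · simp only [cand, Finset.mem_filter]
    exact ⟨opener_mem_ID hD hp, (hD.1 p hp).2.1, (bal_arc hD hp).symm⟩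
  · intro y hy
    simp only [cand, Finset.mem_filter] at hy
    by_contra hc
    push_neg at hc
    have := bal_lt hD hp hy.1 hc hy.2.1
    rw [hy.2.2] at this
    omega

lemma Dmap_ID (hD : IsTL n D) : Dmap n (ID n D) = D := by
  ext q
  rw [mem_Dmap]
  constructor
  · rintro ⟨j, hj, hje⟩
    obtain ⟨hIcc, p, hp, hp2⟩ := mem_sdiff_ID.mp hj
    subst hp2
    rw [partner_arc hD hp] at hje
    rw [← hje]
    exact hp
  · intro hq
    exact ⟨q.2, closer_mem_sdiff hD hq, by rw [partner_arc hD hq]⟩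

lemma cnt_ID (hD : IsTL n D) (m : ℕ) :
    cnt (Finset.Icc 1 (2*n) \ ID n D) m ≤ cnt (ID n D) m := by
  apply Finset.card_le_card_of_injOn (openerOf D)
  · intro l hl
    simp only [Finset.mem_coe, Finset.mem_filter] at hl ⊢
    obtain ⟨hlJ, hlm⟩ := hl
    obtain ⟨_, q, hq, hq2⟩ := mem_sdiff_ID.mp hlJ
    subst hq2
    rw [openerOf_eq hD hq]
    have := hD.1 q hq
    exact ⟨opener_mem_ID hD hq, by omega⟩
  · intro l hl l' hl' he
    simp only [Finset.coe_filter, Set.mem_setOf_eq] at hl hl'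
    obtain ⟨_, q, hq, hq2⟩ := mem_sdiff_ID.mp hl.1
    obtain ⟨_, q', hq', hq2'⟩ := mem_sdiff_ID.mp hl'.1
    subst hq2; subst hq2'
    rw [openerOf_eq hD hq, openerOf_eq hD hq'] at he
    rw [pair_eq_of_fst hD hq hq' he]

lemma hnn_ID (hD : IsTL n D) (m : ℕ) : 0 ≤ bal n (ID n D) m := by
  have := cnt_ID hD m
  simp only [bal]
  omega

end TLFacts

/-! ### standard partitions vs counting -/

lemma cnt_le_of_standard {n : ℕ} {I : Finset ℕ} (h : IsStandardPart n I) (m : ℕ) :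
    cnt (Finset.Icc 1 (2*n) \ I) m ≤ cnt I m := by
  set J := Finset.Icc 1 (2*n) \ I with hJ
  set c := cnt J m with hc
  have hJc : J.card = (Finset.Icc 1 (2*n) \ I).card := by rw [hJ]
  have hJs : J.sort (· ≤ ·) = (Finset.Icc 1 (2*n) \ I).sort (· ≤ ·) := by rw [hJ]
  rcases Nat.eq_zero_or_pos c with h0 | hpos
  · omega
  · have hcJ : c ≤ J.card := Finset.card_filter_le _ _
    have h1 : c - 1 < cnt J m := by omega
    have hgJ : (J.sort (· ≤ ·)).getD (c-1) 0 ≤ m := (getD_le_iff J (c-1) (by omega) m).mpr h1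
    have hstd := h.2.2 (c-1) (by omega)
    rw [← hJs] at hstd
    have hgI : (I.sort (· ≤ ·)).getD (c-1) 0 ≤ m := by omega
    have h2 := (getD_le_iff I (c-1) (by
      have := h.2.1
      omega) m).mp hgI
    have hcnt : cnt I m = (Finset.filter (· ≤ m) I).card := rfl
    omega

lemma standard_of_cnt {n : ℕ} {I : Finset ℕ} (hI : I ⊆ Finset.Icc 1 (2*n))
    (h : ∀ m, cnt (Finset.Icc 1 (2*n) \ I) m ≤ cnt I m) : IsStandardPart n I := by
  have hcard : (Finset.Icc 1 (2*n) \ I).card ≤ I.card := by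
    have := h (2*n)
    rwa [cnt_eq_card hI, cnt_eq_card (Finset.sdiff_subset)] at this
  refine ⟨hI, hcard, ?_⟩
  intro k hk
  set j := ((Finset.Icc 1 (2*n) \ I).sort (· ≤ ·)).getD k 0 with hj
  have hjmem : j ∈ Finset.Icc 1 (2*n) \ I := getD_mem _ k hk
  have h1 : k < cnt (Finset.Icc 1 (2*n) \ I) j := (getD_le_iff _ k hk j).mp (le_refl j)
  have h2 : k < cnt I j := lt_of_lt_of_le h1 (h j)
  have hkI : k < I.card := lt_of_lt_of_le hk hcard
  have h3 : (I.sort (· ≤ ·)).getD k 0 ≤ j := (getD_le_iff I k hkI j).mpr h2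
  have h4 : (I.sort (· ≤ ·)).getD k 0 ∈ I := getD_mem I k hkI
  have h5 : (I.sort (· ≤ ·)).getD k 0 ≠ j := fun he => (Finset.mem_sdiff.mp hjmem).2 (he ▸ h4)
  omega

lemma hnn_of_standard {n : ℕ} {I : Finset ℕ} (h : IsStandardPart n I) (m : ℕ) :
    0 ≤ bal n I m := by
  have := cnt_le_of_standard h m
  simp only [bal]
  omega
end TLDev


open TLDev

/-- The map `D ↦ (I(D), [2n] ∖ I(D))` is a bijection from `T_n` onto the set of standard
partitions of `[2n]` into at most two parts. -/
theorem ID_bijOn (n : ℕ) :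
    Set.BijOn (fun D => (ID n D, Finset.Icc 1 (2 * n) \ ID n D))
      {D : Finset (ℕ × ℕ) | IsTL n D}
      {p : Finset ℕ × Finset ℕ | IsStandardPart n p.1 ∧ p.2 = Finset.Icc 1 (2 * n) \ p.1} := by
  refine ⟨?_, ?_, ?_⟩
  · intro D hD
    simp only [Set.mem_setOf_eq] at hD ⊢
    exact ⟨standard_of_cnt (Finset.filter_subset _ _) (cnt_ID hD), trivial⟩
  · intro D hD D' hD' he
    simp only [Set.mem_setOf_eq] at hD hD'
    have h1 : ID n D = ID n D' := congrArg Prod.fst he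
    calc D = Dmap n (ID n D) := (Dmap_ID hD).symm
      _ = Dmap n (ID n D') := by rw [h1]
      _ = D' := Dmap_ID hD'
  · intro q hq
    simp only [Set.mem_setOf_eq] at hq
    obtain ⟨hstd, hsnd⟩ := hq
    refine ⟨Dmap n q.1, ?_, ?_⟩
    · simp only [Set.mem_setOf_eq]
      exact IsTL_Dmap hstd.1 (hnn_of_standard hstd)
    · have hid : ID n (Dmap n q.1) = q.1 := ID_Dmap hstd.1
      simp only
      rw [hid, ← hsnd]
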